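/- For a nonempty subset I ⊆ {1,...,N}, define Φ(I) := {j−1 : j ∈ I, j ≥ 2} ∪ {N : if 1 ∈ I}. Then for any composition η ∈ ℕ^N, Φ(I) is maximal with respect to Φη := (η_2,...,η_N,η_1+1) if and only if I is maximal with respect to η, where 'I = {t_1<...<t_s} maximal with respect to η' means η_j ≠ η_{t_u} for t_{u−1} < j < t_u (u = 1,...,s, t_0 := 0) and η_j ≠ η_{t_1}+1 for t_s < j ≤ N. -/
import Mathlib


/-- The raising operation on compositions: `Φη = (η_2, …, η_N, η_1 + 1)`. -/
def PhiComp {N : ℕ} (η : Fin N → ℕ) : Fin N → ℕ := fun i =>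
  if h : (i : ℕ) + 1 < N then η ⟨(i : ℕ) + 1, h⟩ else η ⟨0, i.pos⟩ + 1

/-- The operation `Φ` on index sets (1-indexed: `Φ(I) = {j−1 : j ∈ I, j ≥ 2} ∪ {N if 1 ∈ I}`;
here written 0-indexed on `Fin N`). -/
def PhiSet {N : ℕ} (hN : 0 < N) (I : Finset (Fin N)) : Finset (Fin N) :=
  ((I.filter fun j : Fin N => (j : ℕ) ≠ 0).image fun j : Fin N =>
      (⟨(j : ℕ) - 1, lt_of_le_of_lt (Nat.sub_le _ _) j.isLt⟩ : Fin N)) ∪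
    (if (⟨0, hN⟩ : Fin N) ∈ I then {(⟨N - 1, Nat.sub_lt hN one_pos⟩ : Fin N)} else ∅)

/-- `I` is maximal with respect to `η`. -/
def MaximalWrt {N : ℕ} (η : Fin N → ℕ) (I : Finset (Fin N)) : Prop :=
  I.Nonempty ∧ ∀ j : Fin N, j ∉ I →
    if h : (I.filter fun t => j < t).Nonempty
    then η j ≠ η ((I.filter fun t => j < t).min' h)
    else ∀ hI : I.Nonempty, η j ≠ η (I.min' hI) + 1

namespace PhiAux

variable {N : ℕ}

/-- The cyclic shift `j ↦ j+1 (mod N)`. -/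
def sft (hN : 0 < N) (j : Fin N) : Fin N :=
  if h : (j : ℕ) + 1 < N then ⟨(j : ℕ) + 1, h⟩ else ⟨0, hN⟩

lemma sft_surjective (hN : 0 < N) : Function.Surjective (sft hN) := by
  intro k
  by_cases hk : (k : ℕ) = 0
  · refine ⟨⟨N - 1, Nat.sub_lt hN one_pos⟩, ?_⟩
    unfold sft
    rw [dif_neg (by show ¬ (N - 1 + 1 < N); omega)]
    exact Fin.ext hk.symm
  · refine ⟨⟨(k : ℕ) - 1, lt_of_le_of_lt (Nat.sub_le _ _) k.isLt⟩, ?_⟩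
    unfold sft
    rw [dif_pos (by have := k.isLt; simp; omega)]
    exact Fin.ext (by first | omega | (simp; omega))

lemma mem_PhiSet (hN : 0 < N) (I : Finset (Fin N)) (j : Fin N) :
    j ∈ PhiSet hN I ↔ sft hN j ∈ I := by
  unfold PhiSet sft
  by_cases h : (j : ℕ) + 1 < N
  · rw [dif_pos h]
    simp only [Finset.mem_union, Finset.mem_image, Finset.mem_filter]
    constructor
    · rintro (⟨s, ⟨hs, hs0⟩, rfl⟩ | hm)
      · have : (⟨(s : ℕ) - 1 + 1, h⟩ : Fin N) = s := Fin.ext (by first | omega | (simp; omega))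
        rwa [this]
      · exfalso
        split at hm
        · simp only [Finset.mem_singleton] at hm
          have := congrArg Fin.val hm
          simp at this; omega
        · simp at hm
    · intro hs
      exact Or.inl ⟨⟨(j : ℕ) + 1, h⟩, ⟨hs, by simp⟩, Fin.ext (by simp)⟩
  · rw [dif_neg h]
    have hj : (j : ℕ) = N - 1 := by have := j.isLt; omega
    simp only [Finset.mem_union, Finset.mem_image, Finset.mem_filter]
    constructor
    · rintro (⟨s, ⟨hs, hs0⟩, heq⟩ | hm)
      · exfalso
        have := congrArg Fin.val heq
        have hsl := s.isLt
        simp at this; omega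
      · split at hm
        · assumption
        · simp at hm
    · intro h0
      refine Or.inr ?_
      rw [if_pos h0]
      simp only [Finset.mem_singleton]
      exact Fin.ext (by simp [hj])

lemma phiComp_eq (hN : 0 < N) (η : Fin N → ℕ) (j : Fin N) :
    PhiComp η j = η (sft hN j) + (if (j : ℕ) + 1 < N then 0 else 1) := by
  unfold PhiComp sft
  by_cases h : (j : ℕ) + 1 < N
  · rw [dif_pos h, dif_pos h, if_pos h]
    rfl
  · rw [dif_neg h, dif_neg h, if_neg h]

/-- The "target value" against which `η j` is compared in `MaximalWrt`. -/
def Tval (η : Fin N → ℕ) (I : Finset (Fin N)) (hI : I.Nonempty) (j : Fin N) : ℕ :=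
  if h : (I.filter fun t => j < t).Nonempty
  then η ((I.filter fun t => j < t).min' h)
  else η (I.min' hI) + 1

lemma maximalWrt_iff (η : Fin N → ℕ) (I : Finset (Fin N)) (hI : I.Nonempty) :
    MaximalWrt η I ↔ ∀ j ∉ I, η j ≠ Tval η I hI j := by
  unfold MaximalWrt Tval
  rw [and_iff_right hI]
  refine forall_congr' fun j => forall_congr' fun hj => ?_
  split
  · rfl
  · exact ⟨fun h => h hI, fun h _ => h⟩

lemma min_pos (hN : 0 < N) (I : Finset (Fin N)) (hI : I.Nonempty)
    (h0 : (⟨0, hN⟩ : Fin N) ∉ I) : 0 < ((I.min' hI : Fin N) : ℕ) := by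
  rcases Nat.eq_zero_or_pos ((I.min' hI : Fin N) : ℕ) with h | h
  · exfalso
    have : (I.min' hI : Fin N) = ⟨0, hN⟩ := Fin.ext h
    exact h0 (this ▸ I.min'_mem hI)
  · exact h

lemma min'_PhiSet (hN : 0 < N) (I : Finset (Fin N)) (hI : I.Nonempty)
    (hI' : (PhiSet hN I).Nonempty) (h0 : (⟨0, hN⟩ : Fin N) ∉ I) :
    (PhiSet hN I).min' hI' =
      ⟨((I.min' hI : Fin N) : ℕ) - 1,
        lt_of_le_of_lt (Nat.sub_le _ _) (I.min' hI).isLt⟩ := by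
  have hm1 := min_pos hN I hI h0
  have hmlt := (I.min' hI).isLt
  apply le_antisymm
  · apply Finset.min'_le
    rw [mem_PhiSet]
    unfold sft
    rw [dif_pos (by first | omega | (simp; omega))]
    have : (⟨((I.min' hI : Fin N) : ℕ) - 1 + 1, by omega⟩ : Fin N) = I.min' hI :=
      Fin.ext (by first | omega | (simp; omega))
    rw [this]
    exact I.min'_mem hI
  · apply Finset.le_min'
    intro t ht
    rw [mem_PhiSet] at ht
    unfold sft at ht
    by_cases h : (t : ℕ) + 1 < N
    · rw [dif_pos h] at ht
      have := Finset.min'_le I _ ht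
      rw [Fin.le_def] at this ⊢
      simp at this ⊢
      omega
    · rw [dif_neg h] at ht
      exact absurd ht h0

lemma Tval_phi (hN : 0 < N) (η : Fin N → ℕ) (I : Finset (Fin N)) (hI : I.Nonempty)
    (hI' : (PhiSet hN I).Nonempty) (j : Fin N) (hj : sft hN j ∉ I) :
    Tval (PhiComp η) (PhiSet hN I) hI' j =
      Tval η I hI (sft hN j) + (if (j : ℕ) + 1 < N then 0 else 1) := by
  by_cases h : (j : ℕ) + 1 < N
  · -- j is not the last index; sft j = j+1.
    rw [if_pos h]
    have hsft : sft hN j = ⟨(j : ℕ) + 1, h⟩ := dif_pos h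
    by_cases hA : (I.filter fun t => sft hN j < t).Nonempty
    · -- there is an element of I above j+1
      set m := (I.filter fun t => sft hN j < t).min' hA with hm
      have hmmem : m ∈ I ∧ sft hN j < m := by
        have := Finset.min'_mem _ hA
        rw [Finset.mem_filter] at this
        exact this
      have hmval : (j : ℕ) + 1 < (m : ℕ) := by
        have := hmmem.2
        rw [hsft, Fin.lt_def] at this
        exact this
      have hmlt := m.isLt
      -- the min of the filtered PhiSet is ⟨m-1⟩
      have hmem' : (⟨(m : ℕ) - 1, lt_of_le_of_lt (Nat.sub_le _ _) m.isLt⟩ : Fin N)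
          ∈ (PhiSet hN I).filter fun t => j < t := by
        rw [Finset.mem_filter]
        constructor
        · rw [mem_PhiSet]
          unfold sft
          rw [dif_pos (by first | omega | (simp; omega))]
          have : (⟨(m : ℕ) - 1 + 1, by omega⟩ : Fin N) = m := Fin.ext (by first | omega | (simp; omega))
          rw [this]; exact hmmem.1
        · rw [Fin.lt_def]; simp; omega
      have hA' : ((PhiSet hN I).filter fun t => j < t).Nonempty := ⟨_, hmem'⟩
      have hmin' : ((PhiSet hN I).filter fun t => j < t).min' hA' =
          ⟨(m : ℕ) - 1, lt_of_le_of_lt (Nat.sub_le _ _) m.isLt⟩ := by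
        apply le_antisymm
        · exact Finset.min'_le _ _ hmem'
        · apply Finset.le_min'
          intro t ht
          rw [Finset.mem_filter, mem_PhiSet] at ht
          obtain ⟨ht1, ht2⟩ := ht
          rw [Fin.le_def]
          unfold sft at ht1
          by_cases hh : (t : ℕ) + 1 < N
          · rw [dif_pos hh] at ht1
            have : m ≤ (⟨(t : ℕ) + 1, hh⟩ : Fin N) := by
              apply Finset.min'_le
              rw [Finset.mem_filter]
              refine ⟨ht1, ?_⟩
              rw [hsft, Fin.lt_def]
              rw [Fin.lt_def] at ht2
              simp at ht2 ⊢
              omega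
            rw [Fin.le_def] at this
            simp at this ⊢
            omega
          · have := t.isLt
            show (m : ℕ) - 1 ≤ (t : ℕ)
            omega
      unfold Tval
      rw [dif_pos hA', dif_pos hA, hmin']
      rw [phiComp_eq hN]
      unfold sft
      rw [dif_pos (by first | omega | (simp; omega) : ((⟨(m : ℕ) - 1, _⟩ : Fin N) : ℕ) + 1 < N)]
      have : (⟨((⟨(m : ℕ) - 1, lt_of_le_of_lt (Nat.sub_le _ _) m.isLt⟩ : Fin N) : ℕ) + 1,
          by simp; omega⟩ : Fin N) = m := Fin.ext (by first | omega | (simp; omega))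
      rw [this, if_pos (by first | omega | (simp; omega) : ((⟨(m : ℕ) - 1, _⟩ : Fin N) : ℕ) + 1 < N)]
      rfl
    · -- nothing in I above j+1
      by_cases h0 : (⟨0, hN⟩ : Fin N) ∈ I
      · -- then the filtered PhiSet is exactly {N-1}
        have hmem' : (⟨N - 1, Nat.sub_lt hN one_pos⟩ : Fin N)
            ∈ (PhiSet hN I).filter fun t => j < t := by
          rw [Finset.mem_filter]
          constructor
          · rw [mem_PhiSet]
            unfold sft
            rw [dif_neg (by first | omega | (simp; omega))]
            exact h0
          · rw [Fin.lt_def]; simp; omega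
        have hA' : ((PhiSet hN I).filter fun t => j < t).Nonempty := ⟨_, hmem'⟩
        have hmin' : ((PhiSet hN I).filter fun t => j < t).min' hA' =
            ⟨N - 1, Nat.sub_lt hN one_pos⟩ := by
          apply le_antisymm
          · exact Finset.min'_le _ _ hmem'
          · apply Finset.le_min'
            intro t ht
            rw [Finset.mem_filter, mem_PhiSet] at ht
            obtain ⟨ht1, ht2⟩ := ht
            unfold sft at ht1
            by_cases hh : (t : ℕ) + 1 < N
            · exfalso
              rw [dif_pos hh] at ht1
              apply hA
              refine ⟨_, Finset.mem_filter.2 ⟨ht1, ?_⟩⟩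
              rw [hsft, Fin.lt_def]
              rw [Fin.lt_def] at ht2
              simp at ht2 ⊢
              omega
            · have := t.isLt
              rw [Fin.le_def]
              simp; omega
        have hminI : I.min' hI = ⟨0, hN⟩ := by
          apply le_antisymm
          · exact Finset.min'_le _ _ h0
          · rw [Fin.le_def]; simp
        unfold Tval
        rw [dif_pos hA', dif_neg hA, hmin', hminI]
        rw [phiComp_eq hN]
        unfold sft
        rw [dif_neg (by first | omega | (simp; omega) : ¬ ((⟨N - 1, Nat.sub_lt hN one_pos⟩ : Fin N) : ℕ) + 1 < N)]
        rw [if_neg (by first | omega | (simp; omega) : ¬ ((⟨N - 1, Nat.sub_lt hN one_pos⟩ : Fin N) : ℕ) + 1 < N)]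
      · -- 0 ∉ I: filtered PhiSet is empty
        have hA' : ¬ ((PhiSet hN I).filter fun t => j < t).Nonempty := by
          rintro ⟨t, ht⟩
          rw [Finset.mem_filter, mem_PhiSet] at ht
          obtain ⟨ht1, ht2⟩ := ht
          unfold sft at ht1
          by_cases hh : (t : ℕ) + 1 < N
          · rw [dif_pos hh] at ht1
            apply hA
            refine ⟨_, Finset.mem_filter.2 ⟨ht1, ?_⟩⟩
            rw [hsft, Fin.lt_def]
            rw [Fin.lt_def] at ht2
            simp at ht2 ⊢
            omega
          · rw [dif_neg hh] at ht1
            exact h0 ht1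
        unfold Tval
        rw [dif_neg hA', dif_neg hA]
        rw [min'_PhiSet hN I hI hI' h0]
        have hm1 := min_pos hN I hI h0
        have hmlt := (I.min' hI).isLt
        rw [phiComp_eq hN]
        unfold sft
        rw [dif_pos (by first | omega | (simp; omega) : ((⟨((I.min' hI : Fin N) : ℕ) - 1, _⟩ : Fin N) : ℕ) + 1 < N)]
        rw [if_pos (by first | omega | (simp; omega) : ((⟨((I.min' hI : Fin N) : ℕ) - 1, _⟩ : Fin N) : ℕ) + 1 < N)]
        have heq : (⟨((⟨((I.min' hI : Fin N) : ℕ) - 1,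
            lt_of_le_of_lt (Nat.sub_le _ _) (I.min' hI).isLt⟩ : Fin N) : ℕ) + 1,
            by simp; omega⟩ : Fin N) = I.min' hI := Fin.ext (by first | omega | (simp; omega))
        rw [heq]
  · -- j = N-1; sft j = 0
    rw [if_neg h]
    have hjval : (j : ℕ) = N - 1 := by have := j.isLt; omega
    have hsft : sft hN j = ⟨0, hN⟩ := dif_neg h
    have h0 : (⟨0, hN⟩ : Fin N) ∉ I := hsft ▸ hj
    -- filtered PhiSet is empty (nothing above N-1)
    have hA' : ¬ ((PhiSet hN I).filter fun t => j < t).Nonempty := by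
      rintro ⟨t, ht⟩
      rw [Finset.mem_filter] at ht
      have := t.isLt
      have := ht.2
      rw [Fin.lt_def] at this
      omega
    -- filter of I above 0 is all of I
    have hfil : (I.filter fun t => sft hN j < t) = I := by
      apply Finset.filter_true_of_mem
      intro t ht
      rw [hsft, Fin.lt_def]
      simp
      rcases Nat.eq_zero_or_pos (t : ℕ) with hp | hp
      · exact absurd ((Fin.ext hp : t = ⟨0, hN⟩) ▸ ht) h0
      · exact hp
    have hA : (I.filter fun t => sft hN j < t).Nonempty := by
      rw [hfil]; exact hI
    unfold Tval
    rw [dif_neg hA', dif_pos hA]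
    have hmin : (I.filter fun t => sft hN j < t).min' hA = I.min' hI := by
      congr 1
    rw [hmin, min'_PhiSet hN I hI hI' h0]
    have hm1 := min_pos hN I hI h0
    have hmlt := (I.min' hI).isLt
    rw [phiComp_eq hN]
    unfold sft
    rw [dif_pos (by first | omega | (simp; omega) : ((⟨((I.min' hI : Fin N) : ℕ) - 1, _⟩ : Fin N) : ℕ) + 1 < N)]
    rw [if_pos (by first | omega | (simp; omega) : ((⟨((I.min' hI : Fin N) : ℕ) - 1, _⟩ : Fin N) : ℕ) + 1 < N)]
    have heq : (⟨((⟨((I.min' hI : Fin N) : ℕ) - 1,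
        lt_of_le_of_lt (Nat.sub_le _ _) (I.min' hI).isLt⟩ : Fin N) : ℕ) + 1,
        by simp; omega⟩ : Fin N) = I.min' hI := Fin.ext (by first | omega | (simp; omega))
    rw [heq]

end PhiAux

theorem stmt_7 (N : ℕ) (hN : 0 < N) (η : Fin N → ℕ) (I : Finset (Fin N))
    (hI : I.Nonempty) :
    MaximalWrt (PhiComp η) (PhiSet hN I) ↔ MaximalWrt η I := by
  open PhiAux in
  have hI' : (PhiSet hN I).Nonempty := by
    obtain ⟨s, hs⟩ := hI
    obtain ⟨t, ht⟩ := sft_surjective hN s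
    exact ⟨t, (mem_PhiSet hN I t).2 (ht ▸ hs)⟩
  rw [PhiAux.maximalWrt_iff _ _ hI, PhiAux.maximalWrt_iff _ _ hI']
  conv_rhs => rw [(PhiAux.sft_surjective hN).forall]
  refine forall_congr' fun j => ?_
  rw [PhiAux.mem_PhiSet]
  refine imp_congr_right fun hj => ?_
  rw [PhiAux.Tval_phi hN η I hI hI' j hj, PhiAux.phiComp_eq hN]
  by_cases h : (j : ℕ) + 1 < N <;> simp [h]
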